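/- Let (M, X, Y, Z) be finite jointly distributed random variables with the Markov chains M − X − (Y,Z), M − (Y,Z) − X, and Z − (M,Y) − X, whose (X,Y,Z)-marginal equals p_{XY} · p_{Z|XY} for a securely computable pair, and let X_EQ = f(X) be the equivalence class of X. Then I(M; X_EQ | Y) = H(X_EQ | Y). Consequently the minimum of I(U; X_EQ|Y) over p_{U|X_EQ} with U − X_EQ − (Y,Z) and Z − (U,Y) − X_EQ equals H(X_EQ|Y). -/

import Mathlib

open Finset

noncomputable section

/-- Joint pmf of `(M, X_EQ, Y)` where `X_EQ = f(X)`. -/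
def pMEY {M X Y Z E : Type} [Fintype X] [Fintype Z] [DecidableEq E]
    (p : M → X → Y → Z → ℝ) (f : X → E) (m : M) (e : E) (y : Y) : ℝ :=
  ∑ x, ∑ z, if f x = e then p m x y z else 0

/-- `I(M; X_EQ | Y)` for the protocol-induced joint distribution. -/
def IMEgY {M X Y Z E : Type} [Fintype M] [Fintype X] [Fintype Y] [Fintype Z]
    [Fintype E] [DecidableEq E] (p : M → X → Y → Z → ℝ) (f : X → E) : ℝ :=
  ∑ m, ∑ e, ∑ y,
    pMEY p f m e y * Real.log
      (pMEY p f m e y * (∑ m', ∑ x, ∑ z, p m' x y z) /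
        ((∑ x, ∑ z, p m x y z) * (∑ m', pMEY p f m' e y)))

/-- Marginal pmf of `(X_EQ, Y)` computed from `p_{XY}`. -/
def pEYc {X Y E : Type} [Fintype X] [DecidableEq E]
    (pXY : X → Y → ℝ) (f : X → E) (e : E) (y : Y) : ℝ :=
  ∑ x, if f x = e then pXY x y else 0

/-- Collapsed joint pmf of `(X_EQ, Y, Z)`. -/
def pEYZc {X Y Z E : Type} [Fintype X] [DecidableEq E]
    (pXY : X → Y → ℝ) (pZ : Z → X → Y → ℝ) (f : X → E)
    (e : E) (y : Y) (z : Z) : ℝ :=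
  ∑ x, if f x = e then pXY x y * pZ z x y else 0

/-- Conditional entropy `H(X_EQ | Y)`. -/
def HEgY {X Y E : Type} [Fintype X] [Fintype Y] [Fintype E] [DecidableEq E]
    (pXY : X → Y → ℝ) (f : X → E) : ℝ :=
  -∑ e, ∑ y, pEYc pXY f e y * Real.log (pEYc pXY f e y / ∑ x, pXY x y)

private lemma aux_exists_pos {α : Type*} [Fintype α] {v : α → ℝ}
    (hv : ∀ a, 0 ≤ v a) (h : 0 < ∑ a, v a) : ∃ a, 0 < v a := by
  by_contra hc
  push_neg at hc
  have : ∑ a, v a ≤ 0 := Finset.sum_nonpos fun a _ => hc a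
  linarith

private lemma aux_mul_pos_split {a b : ℝ} (ha : 0 ≤ a) (hb : 0 ≤ b)
    (h : 0 < a * b) : 0 < a ∧ 0 < b := by
  constructor
  · rcases eq_or_lt_of_le ha with h' | h'
    · rw [← h', zero_mul] at h; linarith
    · exact h'
  · rcases eq_or_lt_of_le hb with h' | h'
    · rw [← h', mul_zero] at h; linarith
    · exact h'

/-- The key computation: if the joint weights `w i e y` are, for each `(i, y)`,
supported on at most one `e`, then `I(I ; E | Y) = H(E | Y)`. -/
private lemma main_sum {I E Y : Type} [Fintype I] [Fintype E] [Fintype Y]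
    (w : I → E → Y → ℝ) (g : E → Y → ℝ) (pY : Y → ℝ)
    (hw : ∀ i e y, 0 ≤ w i e y)
    (huniq : ∀ i y e1 e2, 0 < w i e1 y → 0 < w i e2 y → e1 = e2)
    (hmargE : ∀ e y, ∑ i, w i e y = g e y)
    (hpos : ∀ e y, 0 < g e y → 0 < pY y) :
    ∑ i, ∑ e, ∑ y, w i e y *
      Real.log (w i e y * pY y / ((∑ e', w i e' y) * g e y))
    = -∑ e, ∑ y, g e y * Real.log (g e y / pY y) := by
  have key : ∀ i e y, w i e y *
      Real.log (w i e y * pY y / ((∑ e', w i e' y) * g e y))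
      = w i e y * Real.log (pY y / g e y) := by
    intro i e y
    rcases eq_or_lt_of_le (hw i e y) with h | h
    · rw [← h, zero_mul, zero_mul]
    · have hsum : (∑ e', w i e' y) = w i e y := by
        refine Finset.sum_eq_single_of_mem e (Finset.mem_univ e) ?_
        intro e' _ hne
        rcases eq_or_lt_of_le (hw i e' y) with h' | h'
        · exact h'.symm
        · exact absurd (huniq i y e' e h' h) hne
      rw [hsum, mul_div_mul_left _ _ (ne_of_gt h)]
  simp only [key]
  have lhs : ∑ i, ∑ e, ∑ y, w i e y * Real.log (pY y / g e y)
      = ∑ e, ∑ y, g e y * Real.log (pY y / g e y) := by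
    rw [Finset.sum_comm]
    refine Finset.sum_congr rfl fun e _ => ?_
    rw [Finset.sum_comm]
    refine Finset.sum_congr rfl fun y _ => ?_
    rw [← Finset.sum_mul, hmargE]
  rw [lhs]
  have flip : ∀ e y, g e y * Real.log (pY y / g e y)
      = -(g e y * Real.log (g e y / pY y)) := by
    intro e y
    have hg0 : 0 ≤ g e y := by
      rw [← hmargE]; exact Finset.sum_nonneg fun i _ => hw i e y
    rcases eq_or_lt_of_le hg0 with h | h
    · rw [← h]; simp
    · have hp := hpos e y h
      rw [Real.log_div (ne_of_gt hp) (ne_of_gt h),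
        Real.log_div (ne_of_gt h) (ne_of_gt hp)]
      ring
  simp only [flip, Finset.sum_neg_distrib]

/-- For any perfectly secure protocol for a securely computable
`(p_{XY}, p_{Z|XY})`, with `X_EQ = f(X)` the equivalence class of `X`:
`I(M; X_EQ | Y) = H(X_EQ | Y)`; consequently the minimum of `I(U; X_EQ | Y)`
over `p_{U|X_EQ}` with `U − X_EQ − (Y,Z)` and `Z − (U,Y) − X_EQ` equals
`H(X_EQ | Y)`. -/
theorem stmt_15 {M X Y Z E : Type} [Fintype M] [Fintype X] [Fintype Y]
    [Fintype Z] [Fintype E] [DecidableEq E]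
    (pXY : X → Y → ℝ) (pZ : Z → X → Y → ℝ)
    (hXYnn : ∀ x y, 0 ≤ pXY x y) (hXYsum : ∑ x, ∑ y, pXY x y = 1)
    (hZnn : ∀ z x y, 0 ≤ pZ z x y) (hZsum : ∀ x y, ∑ z, pZ z x y = 1)
    -- the relation ∼ and secure computability
    (sim : X → X → Prop)
    (hsim : ∀ x x', sim x x' ↔ ∃ (y : Y) (z : Z),
      pXY x y > 0 ∧ pXY x' y > 0 ∧ pZ z x y > 0 ∧ pZ z x' y > 0)
    (hmono : ∀ x x', Relation.ReflTransGen sim x x' →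
      ∀ y, pXY x y > 0 → pXY x' y > 0 → ∀ z, pZ z x y = pZ z x' y)
    -- f maps each x to its equivalence class under ≡
    (f : X → E)
    (hf : ∀ x x', f x = f x' ↔ Relation.ReflTransGen sim x x')
    -- the protocol-induced joint distribution
    (p : M → X → Y → Z → ℝ)
    (hnn : ∀ m x y z, 0 ≤ p m x y z)
    (hmarg : ∀ x y z, ∑ m, p m x y z = pXY x y * pZ z x y)
    -- Markov chain M − X − (Y,Z)
    (hMC1 : ∀ m x y z, (∑ m', p m' x y z) > 0 →
      p m x y z / (∑ m', p m' x y z)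
        = (∑ y', ∑ z', p m x y' z') / (∑ m', ∑ y', ∑ z', p m' x y' z'))
    -- Markov chain M − (Y,Z) − X
    (hMC2 : ∀ m x y z, (∑ m', p m' x y z) > 0 →
      p m x y z / (∑ m', p m' x y z)
        = (∑ x', p m x' y z) / (∑ m', ∑ x', p m' x' y z))
    -- Markov chain Z − (M,Y) − X
    (hMC3 : ∀ m x y z, (∑ z', p m x y z') > 0 →
      p m x y z / (∑ z', p m x y z')
        = (∑ x', p m x' y z) / (∑ x', ∑ z', p m x' y z')) :
    IMEgY p f = HEgY pXY f ∧
    sInf {r : ℝ | ∃ (U : Type) (i : Fintype U) (q : U → E → ℝ),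
      (∀ u e, 0 ≤ q u e) ∧
      (∀ e, (@Finset.univ U i).sum (fun u => q u e) = 1) ∧
      -- Markov chain Z − (U,Y) − X_EQ
      (∀ (u : U) (e : E) (y : Y) (z : Z), q u e * pEYc pXY f e y > 0 →
        pEYZc pXY pZ f e y z / pEYc pXY f e y
          = (∑ e', q u e' * pEYZc pXY pZ f e' y z)
              / (∑ e', q u e' * pEYc pXY f e' y)) ∧
      -- r = I(U; X_EQ | Y)
      r = (@Finset.univ U i).sum (fun u => ∑ e, ∑ y,
            (q u e * pEYc pXY f e y) * Real.log
              ((q u e * pEYc pXY f e y) * (∑ e', pEYc pXY f e' y) /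
                ((∑ e', q u e' * pEYc pXY f e' y) * pEYc pXY f e y)))}
    = HEgY pXY f := by
  classical
  -- nonnegativity facts
  have hpMEYnn : ∀ m e y, 0 ≤ pMEY p f m e y := fun m e y =>
    Finset.sum_nonneg fun x _ => Finset.sum_nonneg fun z _ => by
      split_ifs; exacts [hnn m x y z, le_rfl]
  have hpEYnn : ∀ e y, 0 ≤ pEYc pXY f e y := fun e y =>
    Finset.sum_nonneg fun x _ => by
      split_ifs; exacts [hXYnn x y, le_rfl]
  have hpEYZnn : ∀ e y z, 0 ≤ pEYZc pXY pZ f e y z := fun e y z =>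
    Finset.sum_nonneg fun x _ => by
      split_ifs; exacts [mul_nonneg (hXYnn x y) (hZnn z x y), le_rfl]
  -- extraction from positivity of pEYc
  have hEYex : ∀ e y, 0 < pEYc pXY f e y → ∃ x, f x = e ∧ 0 < pXY x y := by
    intro e y h
    obtain ⟨x, hx⟩ := aux_exists_pos
      (v := fun x => if f x = e then pXY x y else 0)
      (fun x => by split_ifs; exacts [hXYnn x y, le_rfl]) h
    by_cases hc : f x = e
    · rw [if_pos hc] at hx; exact ⟨x, hc, hx⟩
    · rw [if_neg hc] at hx; exact absurd hx (lt_irrefl 0)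
  -- extraction from positivity of pEYZc
  have hEYZex : ∀ e y z, 0 < pEYZc pXY pZ f e y z →
      ∃ x, f x = e ∧ 0 < pXY x y ∧ 0 < pZ z x y := by
    intro e y z h
    obtain ⟨x, hx⟩ := aux_exists_pos
      (v := fun x => if f x = e then pXY x y * pZ z x y else 0)
      (fun x => by split_ifs
                   exacts [mul_nonneg (hXYnn x y) (hZnn z x y), le_rfl]) h
    by_cases hc : f x = e
    · rw [if_pos hc] at hx
      obtain ⟨h1, h2⟩ := aux_mul_pos_split (hXYnn x y) (hZnn z x y) hx
      exact ⟨x, hc, h1, h2⟩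
    · rw [if_neg hc] at hx; exact absurd hx (lt_irrefl 0)
  -- uniqueness of the class given (y, z)
  have hclassYZ : ∀ y z e1 e2, 0 < pEYZc pXY pZ f e1 y z →
      0 < pEYZc pXY pZ f e2 y z → e1 = e2 := by
    intro y z e1 e2 h1 h2
    obtain ⟨x1, hfx1, hx1, hz1⟩ := hEYZex e1 y z h1
    obtain ⟨x2, hfx2, hx2, hz2⟩ := hEYZex e2 y z h2
    rw [← hfx1, ← hfx2, hf]
    exact Relation.ReflTransGen.single
      ((hsim x1 x2).mpr ⟨y, z, hx1, hx2, hz1, hz2⟩)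
  -- rewriting pMEY with the inner z-sum pulled out of the if
  have hpMEY_eq : ∀ m e y, pMEY p f m e y
      = ∑ x, (if f x = e then ∑ z, p m x y z else 0) := by
    intro m e y
    unfold pMEY
    refine Finset.sum_congr rfl fun x _ => ?_
    split_ifs with hc
    · rfl
    · simp
  -- uniqueness of the class given (m, y)
  have hMuniq : ∀ m y e1 e2, 0 < pMEY p f m e1 y →
      0 < pMEY p f m e2 y → e1 = e2 := by
    intro m y e1 e2 h1 h2
    have ext : ∀ e, 0 < pMEY p f m e y →
        ∃ x, f x = e ∧ 0 < ∑ z, p m x y z := by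
      intro e h
      rw [hpMEY_eq] at h
      obtain ⟨x, hx⟩ := aux_exists_pos
        (v := fun x => if f x = e then ∑ z, p m x y z else 0)
        (fun x => by
          split_ifs
          exacts [Finset.sum_nonneg fun z _ => hnn m x y z, le_rfl]) h
      by_cases hc : f x = e
      · rw [if_pos hc] at hx; exact ⟨x, hc, hx⟩
      · rw [if_neg hc] at hx; exact absurd hx (lt_irrefl 0)
    obtain ⟨x1, hfx1, hS1⟩ := ext e1 h1
    obtain ⟨x2, hfx2, hS2⟩ := ext e2 h2
    obtain ⟨z1, hz1⟩ := aux_exists_pos (fun z => hnn m x1 y z) hS1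
    have hR := hMC3 m x1 y z1 hS1
    have hRpos : 0 < (∑ x', p m x' y z1) / (∑ x', ∑ z', p m x' y z') := by
      rw [← hR]; exact div_pos hz1 hS1
    have h2' : 0 < p m x2 y z1 := by
      have hq := hMC3 m x2 y z1 hS2
      have hdiv : 0 < p m x2 y z1 / (∑ z', p m x2 y z') := by rw [hq]; exact hRpos
      have := mul_pos hdiv hS2
      rwa [div_mul_cancel₀ _ (ne_of_gt hS2)] at this
    have hm1 : 0 < ∑ m', p m' x1 y z1 :=
      lt_of_lt_of_le hz1
        (Finset.single_le_sum (fun m' _ => hnn m' x1 y z1) (Finset.mem_univ m))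
    have hm2 : 0 < ∑ m', p m' x2 y z1 :=
      lt_of_lt_of_le h2'
        (Finset.single_le_sum (fun m' _ => hnn m' x2 y z1) (Finset.mem_univ m))
    rw [hmarg] at hm1 hm2
    obtain ⟨hx1p, hz1p⟩ := aux_mul_pos_split (hXYnn x1 y) (hZnn z1 x1 y) hm1
    obtain ⟨hx2p, hz2p⟩ := aux_mul_pos_split (hXYnn x2 y) (hZnn z1 x2 y) hm2
    rw [← hfx1, ← hfx2, hf]
    exact Relation.ReflTransGen.single
      ((hsim x1 x2).mpr ⟨y, z1, hx1p, hx2p, hz1p, hz2p⟩)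
  -- marginal identities
  have hPY : ∀ y, (∑ m', ∑ x, ∑ z, p m' x y z) = ∑ x, pXY x y := by
    intro y
    rw [Finset.sum_comm]
    refine Finset.sum_congr rfl fun x _ => ?_
    rw [Finset.sum_comm]
    calc ∑ z, ∑ m', p m' x y z = ∑ z, pXY x y * pZ z x y :=
          Finset.sum_congr rfl fun z _ => hmarg x y z
      _ = pXY x y := by rw [← Finset.mul_sum, hZsum, mul_one]
  have hMsum : ∀ m y, (∑ x, ∑ z, p m x y z) = ∑ e', pMEY p f m e' y := by
    intro m y
    simp only [hpMEY_eq]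
    symm
    rw [Finset.sum_comm]
    refine Finset.sum_congr rfl fun x _ => ?_
    simp [Finset.sum_ite_eq]
  have hMmarg : ∀ e y, (∑ m', pMEY p f m' e y) = pEYc pXY f e y := by
    intro e y
    simp only [hpMEY_eq]
    rw [Finset.sum_comm]
    unfold pEYc
    refine Finset.sum_congr rfl fun x _ => ?_
    by_cases hc : f x = e
    · simp only [if_pos hc]
      rw [Finset.sum_comm]
      calc ∑ z, ∑ m', p m' x y z = ∑ z, pXY x y * pZ z x y :=
            Finset.sum_congr rfl fun z _ => hmarg x y z
        _ = pXY x y := by rw [← Finset.mul_sum, hZsum, mul_one]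
    · simp [hc]
  have hEsum : ∀ y, (∑ e, pEYc pXY f e y) = ∑ x, pXY x y := by
    intro y
    unfold pEYc
    rw [Finset.sum_comm]
    refine Finset.sum_congr rfl fun x _ => ?_
    simp [Finset.sum_ite_eq]
  have hposEY : ∀ e y, 0 < pEYc pXY f e y → 0 < ∑ x, pXY x y := by
    intro e y h
    refine lt_of_lt_of_le h ?_
    unfold pEYc
    refine Finset.sum_le_sum fun x _ => ?_
    split_ifs; exacts [le_rfl, hXYnn x y]
  -- Part 1
  have part1 : IMEgY p f = HEgY pXY f := by
    have key := main_sum (pMEY p f) (pEYc pXY f) (fun y => ∑ x, pXY x y)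
      hpMEYnn hMuniq hMmarg hposEY
    unfold IMEgY HEgY
    rw [← key]
    refine Finset.sum_congr rfl fun m _ => Finset.sum_congr rfl fun e _ =>
      Finset.sum_congr rfl fun y _ => ?_
    rw [hPY y, hMsum m y, hMmarg e y]
  refine ⟨part1, ?_⟩
  -- Part 2
  have sInf_of : ∀ (s : Set ℝ) (c : ℝ), (∀ r ∈ s, r = c) → s.Nonempty →
      sInf s = c := by
    rintro s c hall ⟨r, hr⟩
    have hs : s = {c} :=
      Set.eq_singleton_iff_unique_mem.mpr ⟨hall r hr ▸ hr, hall⟩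
    rw [hs, csInf_singleton]
  refine sInf_of _ _ ?_ ?_
  · -- every element of the set equals H(X_EQ | Y)
    rintro r ⟨U, i, q, hq0, hq1, hMk, rfl⟩
    have huniq : ∀ u y e1 e2, 0 < q u e1 * pEYc pXY f e1 y →
        0 < q u e2 * pEYc pXY f e2 y → e1 = e2 := by
      intro u y e1 e2 h1 h2
      obtain ⟨hq1p, hE1p⟩ := aux_mul_pos_split (hq0 u e1) (hpEYnn e1 y) h1
      obtain ⟨hq2p, hE2p⟩ := aux_mul_pos_split (hq0 u e2) (hpEYnn e2 y) h2
      obtain ⟨x1, hfx1, hx1⟩ := hEYex e1 y hE1p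
      obtain ⟨z1, hz1⟩ := aux_exists_pos (fun z => hZnn z x1 y)
        (by rw [hZsum]; exact one_pos)
      have hE1Z : 0 < pEYZc pXY pZ f e1 y z1 := by
        unfold pEYZc
        have hterm : (0:ℝ) < (if f x1 = e1 then pXY x1 y * pZ z1 x1 y else 0) := by
          rw [if_pos hfx1]; exact mul_pos hx1 hz1
        refine lt_of_lt_of_le hterm
          (Finset.single_le_sum
            (f := fun x => if f x = e1 then pXY x y * pZ z1 x y else 0)
            (fun x _ => ?_) (Finset.mem_univ x1))
        split_ifs
        exacts [mul_nonneg (hXYnn x y) (hZnn z1 x y), le_rfl]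
      have hD : 0 < ∑ e', q u e' * pEYc pXY f e' y :=
        lt_of_lt_of_le h1
          (Finset.single_le_sum
            (fun e' _ => mul_nonneg (hq0 u e') (hpEYnn e' y))
            (Finset.mem_univ e1))
      have hRpos : 0 < (∑ e', q u e' * pEYZc pXY pZ f e' y z1)
          / (∑ e', q u e' * pEYc pXY f e' y) := by
        rw [← hMk u e1 y z1 h1]
        exact div_pos hE1Z hE1p
      have hE2Z : 0 < pEYZc pXY pZ f e2 y z1 := by
        have hq := hMk u e2 y z1 h2
        have hdiv : 0 < pEYZc pXY pZ f e2 y z1 / pEYc pXY f e2 y := by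
          rw [hq]; exact hRpos
        have := mul_pos hdiv hE2p
        rwa [div_mul_cancel₀ _ (ne_of_gt hE2p)] at this
      exact hclassYZ y z1 e1 e2 hE1Z hE2Z
    have key := main_sum (I := U) (fun u e y => q u e * pEYc pXY f e y)
      (pEYc pXY f) (fun y => ∑ e', pEYc pXY f e' y)
      (fun u e y => mul_nonneg (hq0 u e) (hpEYnn e y))
      huniq
      (fun e y => by rw [← Finset.sum_mul, hq1, one_mul])
      (fun e y h => lt_of_lt_of_le h
        (Finset.single_le_sum (fun e' _ => hpEYnn e' y) (Finset.mem_univ e)))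
    rw [key]
    unfold HEgY
    congr 1
    refine Finset.sum_congr rfl fun e _ => Finset.sum_congr rfl fun y _ => ?_
    rw [hEsum y]
  · -- the set is nonempty: take U = E with q deterministic
    refine ⟨_, ⟨E, inferInstance, fun u e => if u = e then 1 else 0,
      ?_, ?_, ?_, rfl⟩⟩
    · intro u e; dsimp only; split_ifs; exacts [zero_le_one, le_rfl]
    · intro e; simp
    · intro u e y z h
      have h' : (if u = e then (1:ℝ) else 0) * pEYc pXY f e y > 0 := h
      have hue : u = e := by
        by_contra hc
        rw [if_neg hc, zero_mul] at h'
        exact absurd h' (lt_irrefl 0)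
      subst hue
      simp [ite_mul, Finset.sum_ite_eq]

end
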